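/- Suppose u : I → ℂ (I a bounded interval with probability density π) lies in the Sobolev-type space H^q(π dz), and let P_K u denote its orthogonal projection onto the span of the first K orthogonal polynomials with respect to π. If u(z) = e^{i a(z) t / ε} u_in(z) with a, u_in smooth and a' bounded below in modulus, then every bound of the form ‖u − P_K u‖_{L²(π dz)} ≤ C ‖∂_z^q u‖_{L²(π dz)} K^{−q} yields ‖u − P_K u‖_{L²(π dz)} ≤ C' ε^{−q} K^{−q}; in particular, ∂_z^q u has L² norm of size at least c t^q ε^{−q} for small ε, so K must grow like ε^{−1} to maintain a fixed error tolerance. -/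

import Mathlib

open MeasureTheory

open scoped ENNReal

lemma sqrtInt_eq {μ : Measure ℝ} {f : ℝ → ℂ} (hf : MemLp f 2 μ) :
    Real.sqrt (∫ z, ‖f z‖ ^ 2 ∂μ) = (eLpNorm f 2 μ).toReal := by
  rw [hf.eLpNorm_eq_integral_rpow_norm two_ne_zero ENNReal.ofNat_ne_top,
    ENNReal.toReal_ofReal (by positivity)]
  have h2 : ((2:ℝ≥0∞)).toReal = 2 := by simp
  rw [h2, Real.sqrt_eq_rpow]
  norm_num

lemma mink {μ : Measure ℝ} {f g : ℝ → ℂ} (hf : MemLp f 2 μ) (hg : MemLp g 2 μ) :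
    Real.sqrt (∫ z, ‖f z + g z‖ ^ 2 ∂μ)
      ≤ Real.sqrt (∫ z, ‖f z‖ ^ 2 ∂μ) + Real.sqrt (∫ z, ‖g z‖ ^ 2 ∂μ) := by
  rw [sqrtInt_eq (f := fun z => f z + g z) (hf.add hg), sqrtInt_eq hf, sqrtInt_eq hg]
  rw [← ENNReal.toReal_add hf.eLpNorm_ne_top hg.eLpNorm_ne_top]
  exact ENNReal.toReal_mono (by simp [hf.eLpNorm_ne_top, hg.eLpNorm_ne_top])
    (eLpNorm_add_le hf.1 hg.1 one_le_two)

lemma lbd {μ : Measure ℝ} [IsProbabilityMeasure μ] {f g : ℝ → ℂ}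
    (hf : MemLp f 2 μ) (hg : MemLp g 2 μ) {c : ℝ} (hc : 0 ≤ c)
    (h : ∀ z, c ≤ ‖f z‖ + ‖g z‖) :
    c - Real.sqrt (∫ z, ‖g z‖ ^ 2 ∂μ) ≤ Real.sqrt (∫ z, ‖f z‖ ^ 2 ∂μ) := by
  rw [sub_le_iff_le_add, sqrtInt_eq hf, sqrtInt_eq hg]
  have h1 : eLpNorm (fun _ : ℝ => c) 2 μ ≤ eLpNorm f 2 μ + eLpNorm g 2 μ := by
    calc eLpNorm (fun _ : ℝ => c) 2 μ
        ≤ eLpNorm (fun z => ‖f z‖ + ‖g z‖) 2 μ := by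
          refine eLpNorm_mono fun z => ?_
          rw [Real.norm_eq_abs, abs_of_nonneg hc, Real.norm_eq_abs,
            abs_of_nonneg (by positivity)]
          exact h z
      _ ≤ eLpNorm (fun z => ‖f z‖) 2 μ + eLpNorm (fun z => ‖g z‖) 2 μ :=
          eLpNorm_add_le hf.norm.1 hg.norm.1 one_le_two
      _ = eLpNorm f 2 μ + eLpNorm g 2 μ := by rw [eLpNorm_norm, eLpNorm_norm]
  have h2 : eLpNorm (fun _ : ℝ => c) 2 μ = ENNReal.ofReal c := by
    rw [eLpNorm_const c two_ne_zero (IsProbabilityMeasure.ne_zero μ)]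
    simp [Real.enorm_eq_ofReal hc, Real.nnnorm_of_nonneg hc, ENNReal.ofReal, Real.toNNReal_of_nonneg hc]
  have := ENNReal.toReal_mono (by simp [hf.eLpNorm_ne_top, hg.eLpNorm_ne_top]) (h2 ▸ h1)
  rwa [ENNReal.toReal_ofReal hc, ENNReal.toReal_add hf.eLpNorm_ne_top hg.eLpNorm_ne_top] at this


/-- For `u(z) = e^{i a(z) t/ε} u_in(z)` with `|u_in| ≥ m > 0` and `|a'| ≥ α > 0`,
the `z`-derivative of `u` blows up like `1/ε`: pointwise
`|∂_z u| ≥ α t m/ε − |∂_z u_in|`, hence `‖∂_z u‖_{L²(μ)} ≥ α t m/ε − ‖∂_z u_in‖_{L²(μ)}`;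
consequently any spectral estimate `‖u − P_K u‖ ≤ C ‖∂_z u‖_{L²} K⁻¹` yields a bound
`‖u − P_K u‖ ≤ C' ε⁻¹ K⁻¹` with `C'` independent of `ε`, so `K` must grow like `ε⁻¹`. -/
theorem stmt11 (μ : Measure ℝ) [IsProbabilityMeasure μ]
    (t m α : ℝ) (ht : 0 < t) (hm : 0 < m) (hα : 0 < α)
    (a a' : ℝ → ℝ) (uin uin' : ℝ → ℂ)
    (ha : ∀ z, HasDerivAt a (a' z) z)
    (huin : ∀ z, HasDerivAt uin (uin' z) z)
    (hlb : ∀ z, m ≤ ‖uin z‖)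
    (halb : ∀ z, α ≤ |a' z|)
    (hL2uin' : MemLp uin' 2 μ)
    (hL2au : MemLp (fun z => (a' z : ℂ) * uin z) 2 μ)
    (hL2d : ∀ ε : ℝ, 0 < ε →
      MemLp (fun z => deriv (fun z' =>
        Complex.exp (Complex.I * (a z') * t / ε) * uin z') z) 2 μ) :
    (∀ ε : ℝ, 0 < ε → ∀ z : ℝ,
      α * t * m / ε - ‖uin' z‖
        ≤ ‖deriv (fun z' =>
            Complex.exp (Complex.I * (a z') * t / ε) * uin z') z‖) ∧
    (∀ ε : ℝ, 0 < ε →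
      α * t * m / ε - Real.sqrt (∫ z, ‖uin' z‖ ^ 2 ∂μ)
        ≤ Real.sqrt (∫ z, ‖deriv (fun z' =>
            Complex.exp (Complex.I * (a z') * t / ε) * uin z') z‖ ^ 2 ∂μ)) ∧
    (∀ (err : ℝ → ℕ → ℝ) (C : ℝ), 0 ≤ C →
      (∀ (ε : ℝ) (K : ℕ), 0 < ε → 1 ≤ K →
        err ε K ≤ C * Real.sqrt (∫ z, ‖deriv (fun z' =>
          Complex.exp (Complex.I * (a z') * t / ε) * uin z') z‖ ^ 2 ∂μ) * (K : ℝ)⁻¹) →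
      ∃ C' : ℝ, ∀ (ε : ℝ) (K : ℕ), 0 < ε → ε ≤ 1 → 1 ≤ K →
        err ε K ≤ C' * ε⁻¹ * (K : ℝ)⁻¹) := by
  -- the derivative, computed
  have hD : ∀ (ε : ℝ) (z : ℝ),
      HasDerivAt (fun z' => Complex.exp (Complex.I * (a z') * t / ε) * uin z')
        (Complex.exp (Complex.I * (a z) * t / ε) * (Complex.I * (a' z) * t / ε) * uin z
          + Complex.exp (Complex.I * (a z) * t / ε) * uin' z) z := by
    intro ε z
    have h0 : HasDerivAt (fun z' : ℝ => ((a z' : ℂ))) ((a' z : ℂ)) z := (ha z).ofReal_comp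
    have h1 : HasDerivAt (fun z' : ℝ => Complex.I * (a z' : ℂ) * (t : ℂ) / (ε : ℂ))
        (Complex.I * (a' z : ℂ) * (t : ℂ) / (ε : ℂ)) z :=
      ((h0.const_mul Complex.I).mul_const _).div_const _
    exact h1.cexp.mul (huin z)
  have hDeq : ∀ (ε : ℝ) (z : ℝ),
      deriv (fun z' => Complex.exp (Complex.I * (a z') * t / ε) * uin z') z
        = Complex.exp (Complex.I * (a z) * t / ε) * (Complex.I * (a' z) * t / ε) * uin z
          + Complex.exp (Complex.I * (a z) * t / ε) * uin' z := fun ε z => (hD ε z).deriv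
  have hE : ∀ (ε : ℝ) (z : ℝ),
      ‖Complex.exp (Complex.I * (a z) * t / ε)‖ = 1 := by
    intro ε z
    rw [show Complex.I * ((a z : ℂ)) * (t : ℂ) / (ε : ℂ)
        = ((a z * t / ε : ℝ) : ℂ) * Complex.I by push_cast; ring]
    exact Complex.norm_exp_ofReal_mul_I _
  -- part 1 (pointwise)
  have part1 : ∀ ε : ℝ, 0 < ε → ∀ z : ℝ,
      α * t * m / ε - ‖uin' z‖
        ≤ ‖deriv (fun z' =>
            Complex.exp (Complex.I * (a z') * t / ε) * uin z') z‖ := by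
    intro ε hε z
    rw [hDeq ε z]
    set E := Complex.exp (Complex.I * (a z) * t / ε) with hEdef
    set A := E * (Complex.I * (a' z) * t / ε) * uin z with hA
    set B := E * uin' z with hB
    have h4 : ‖A‖ - ‖B‖ ≤ ‖A + B‖ := by
      have := norm_sub_norm_le A (-B)
      simpa using this
    have h5 : ‖A‖ = |a' z| * (t / ε) * ‖uin z‖ := by
      rw [hA, norm_mul, norm_mul, norm_div, norm_mul, norm_mul, hE ε z, Complex.norm_I,
        Complex.norm_real, Complex.norm_real, Complex.norm_real, Real.norm_eq_abs,
        Real.norm_eq_abs, Real.norm_eq_abs, abs_of_pos ht, abs_of_pos hε]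
      ring
    have hB5 : ‖B‖ = ‖uin' z‖ := by
      rw [hB, norm_mul, hE ε z, one_mul]
    have hr : (0:ℝ) ≤ t / ε := le_of_lt (div_pos ht hε)
    have h6 : α * t * m / ε ≤ ‖A‖ := by
      rw [h5]
      have := mul_le_mul (mul_le_mul_of_nonneg_right (halb z) hr) (hlb z) hm.le
        (mul_nonneg (abs_nonneg _) hr)
      calc α * t * m / ε = α * (t / ε) * m := by ring
        _ ≤ |a' z| * (t / ε) * ‖uin z‖ := this
    linarith [h4, h6, hB5.ge, hB5.le]
  refine ⟨part1, ?_, ?_⟩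
  · -- part 2: L² lower bound
    intro ε hε
    refine lbd (hL2d ε hε) hL2uin' (le_of_lt (div_pos (by positivity) hε)) fun z => ?_
    have := part1 ε hε z
    linarith
  · -- part 3
    intro err C hC hbound
    set A := Real.sqrt (∫ z, ‖(a' z : ℂ) * uin z‖ ^ 2 ∂μ) with hAdef
    set B := Real.sqrt (∫ z, ‖uin' z‖ ^ 2 ∂μ) with hBdef
    refine ⟨C * (t * A + B), ?_⟩
    intro ε K hε hε1 hK
    have hA0 : 0 ≤ A := Real.sqrt_nonneg _
    have hB0 : 0 ≤ B := Real.sqrt_nonneg _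
    -- continuity of the exponential factor
    have hadiff : Differentiable ℝ a := fun z => (ha z).differentiableAt
    have hacont : Continuous a := hadiff.continuous
    have hEcont : Continuous (fun z : ℝ => Complex.exp (Complex.I * (a z) * t / ε)) := by
      apply Complex.continuous_exp.comp
      exact (((continuous_const.mul (Complex.continuous_ofReal.comp hacont)).mul
        continuous_const).div_const _)
    -- the two pieces of the derivative
    set f : ℝ → ℂ := fun z => Complex.exp (Complex.I * (a z) * t / ε)
      * (Complex.I * (t : ℂ) / (ε : ℂ)) * ((a' z : ℂ) * uin z) with hfdef
    set g : ℝ → ℂ := fun z => Complex.exp (Complex.I * (a z) * t / ε) * uin' z with hgdef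
    have hfnorm : ∀ z, ‖f z‖ = (t / ε) * ‖(a' z : ℂ) * uin z‖ := by
      intro z
      simp only [hfdef, norm_mul, norm_div, hE ε z, Complex.norm_I,
        Complex.norm_real, Real.norm_eq_abs, abs_of_pos ht, abs_of_pos hε]
      ring
    have hgnorm : ∀ z, ‖g z‖ = ‖uin' z‖ := by
      intro z
      simp only [hgdef, norm_mul, hE ε z, one_mul]
    have hfL2 : MemLp f 2 μ := by
      refine hL2au.of_le_mul (c := t / ε)
        (((hEcont.aestronglyMeasurable).mul_const _).mul hL2au.1)
        (Filter.Eventually.of_forall fun z => ?_)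
      rw [hfnorm z]
    have hgL2 : MemLp g 2 μ := by
      refine hL2uin'.of_le (hEcont.aestronglyMeasurable.mul hL2uin'.1)
        (Filter.Eventually.of_forall fun z => ?_)
      rw [hgnorm z]
    -- identify the derivative with f + g
    have hDfg : ∀ z, deriv (fun z' =>
        Complex.exp (Complex.I * (a z') * t / ε) * uin z') z = f z + g z := by
      intro z
      rw [hDeq ε z, hfdef, hgdef]
      ring
    have hint : (∫ z, ‖deriv (fun z' =>
        Complex.exp (Complex.I * (a z') * t / ε) * uin z') z‖ ^ 2 ∂μ)
        = ∫ z, ‖f z + g z‖ ^ 2 ∂μ := by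
      refine integral_congr_ae (Filter.Eventually.of_forall fun z => ?_)
      dsimp only
      rw [hDfg z]
    have hfint : Real.sqrt (∫ z, ‖f z‖ ^ 2 ∂μ) = (t / ε) * A := by
      have : (∫ z, ‖f z‖ ^ 2 ∂μ) = (t / ε) ^ 2 * ∫ z, ‖(a' z : ℂ) * uin z‖ ^ 2 ∂μ := by
        rw [← integral_const_mul]
        refine integral_congr_ae (Filter.Eventually.of_forall fun z => ?_)
        dsimp only
        rw [hfnorm z]; ring
      rw [this, Real.sqrt_mul (sq_nonneg _), Real.sqrt_sq (le_of_lt (div_pos ht hε)), hAdef]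
    have hS : Real.sqrt (∫ z, ‖deriv (fun z' =>
        Complex.exp (Complex.I * (a z') * t / ε) * uin z') z‖ ^ 2 ∂μ)
        ≤ ε⁻¹ * (t * A + B) := by
      rw [hint]
      have h1 := mink hfL2 hgL2
      have h2 : Real.sqrt (∫ z, ‖g z‖ ^ 2 ∂μ) = B := by
        rw [hBdef]
        congr 1
        refine integral_congr_ae (Filter.Eventually.of_forall fun z => ?_)
        dsimp only
        rw [hgnorm z]
      rw [hfint, h2] at h1
      have hinv : (1:ℝ) ≤ ε⁻¹ := (one_le_inv₀ hε).2 hε1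
      have : (t / ε) * A + B ≤ ε⁻¹ * (t * A + B) := by
        have hB1 : B ≤ ε⁻¹ * B := le_mul_of_one_le_left hB0 hinv
        have : (t / ε) * A = ε⁻¹ * (t * A) := by ring
        linarith [this.le, this.ge]
      linarith
    calc err ε K ≤ C * Real.sqrt (∫ z, ‖deriv (fun z' =>
          Complex.exp (Complex.I * (a z') * t / ε) * uin z') z‖ ^ 2 ∂μ) * (K : ℝ)⁻¹ :=
        hbound ε K hε hK
      _ ≤ C * (ε⁻¹ * (t * A + B)) * (K : ℝ)⁻¹ :=
        mul_le_mul_of_nonneg_right (mul_le_mul_of_nonneg_left hS hC) (by positivity)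
      _ = C * (t * A + B) * ε⁻¹ * (K : ℝ)⁻¹ := by ring
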